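/- Let ι be a type, Γ₀ : Finset ι → ℝ with Γ₀(ζ) = 0 whenever |ζ| ≥ 2, let β ∈ Finset ι be nonempty and t ∈ ℝ. Define Γ₁ : Finset ι → ℝ by Γ₁(β) = Γ₀(β) + t and Γ₁(ζ) = Γ₀(ζ) for ζ ≠ β, and define f(Γ)(α) = Σ_{π ∈ Finpartition α} Π_{ζ ∈ π.parts} Γ(ζ). Then for every α ∈ Finset ι: f(Γ₁)(α) = f(Γ₀)(α) + t · (Π_{a ∈ α∖β} Γ₀({a})) if β ⊆ α, and f(Γ₁)(α) = f(Γ₀)(α) otherwise. -/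
import Mathlib


/-- Exact linearization of the map `f` from connected correlation functions to
multipoint means around a point `Γ₀` supported on singletons (a factorized
equilibrium): perturbing `Γ₀` by `t` at a single nonempty block `β` changes
`f(Γ)(α)` by `t · Π_{a ∈ α∖β} Γ₀({a})` when `β ⊆ α`, and not at all otherwise. -/
theorem ccf_to_means_linearization_at_equilibrium
    (ι : Type*) [DecidableEq ι]
    (Γ₀ : Finset ι → ℝ) (hΓ₀ : ∀ ζ : Finset ι, 2 ≤ ζ.card → Γ₀ ζ = 0)
    (β : Finset ι) (hβ : β.Nonempty) (t : ℝ)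
    (Γ₁ : Finset ι → ℝ) (hΓ₁β : Γ₁ β = Γ₀ β + t)
    (hΓ₁ : ∀ ζ : Finset ι, ζ ≠ β → Γ₁ ζ = Γ₀ ζ)
    (f : (Finset ι → ℝ) → Finset ι → ℝ)
    (hf : ∀ (G : Finset ι → ℝ) (α : Finset ι),
      f G α = ∑ π : Finpartition α, ∏ ζ ∈ π.parts, G ζ) :
    ∀ α : Finset ι,
      f Γ₁ α = f Γ₀ α + (if β ⊆ α then t * ∏ a ∈ α \ β, Γ₀ {a} else 0) := by
  intro α
  rw [hf, hf]
  -- pointwise expansion of each product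
  have key : ∀ π : Finpartition α,
      ∏ ζ ∈ π.parts, Γ₁ ζ = (∏ ζ ∈ π.parts, Γ₀ ζ)
        + (if β ∈ π.parts then t * ∏ ζ ∈ π.parts.erase β, Γ₀ ζ else 0) := by
    intro π
    by_cases hmem : β ∈ π.parts
    · rw [if_pos hmem, ← Finset.mul_prod_erase _ _ hmem, ← Finset.mul_prod_erase _ Γ₀ hmem]
      have herase : ∏ ζ ∈ π.parts.erase β, Γ₁ ζ = ∏ ζ ∈ π.parts.erase β, Γ₀ ζ :=
        Finset.prod_congr rfl fun ζ hζ => hΓ₁ ζ (Finset.ne_of_mem_erase hζ)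
      rw [herase, hΓ₁β]; ring
    · rw [if_neg hmem, add_zero]
      exact Finset.prod_congr rfl fun ζ hζ => hΓ₁ ζ (fun h => hmem (h ▸ hζ))
  simp_rw [key, Finset.sum_add_distrib]
  congr 1
  by_cases hβα : β ⊆ α
  · rw [if_pos hβα]
    -- the distinguished partition
    have hbne : β ≠ (⊥ : Finset ι) := hβ.ne_empty
    have hdisj : Disjoint (α \ β) β := Finset.sdiff_disjoint
    have hsup : (α \ β) ⊔ β = α := Finset.sdiff_union_of_subset hβα
    set π₀ : Finpartition α := (⊥ : Finpartition (α \ β)).extend hbne hdisj hsup with hπ₀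
    have hβnotbot : β ∉ ((α \ β).map ⟨singleton, Finset.singleton_injective⟩) := by
      intro h
      obtain ⟨a, ha, rfl⟩ := Finset.mem_map.1 h
      exact (Finset.mem_sdiff.1 ha).2 (Finset.mem_singleton_self a)
    have hπ₀parts : π₀.parts = insert β ((α \ β).map ⟨singleton, Finset.singleton_injective⟩) :=
      rfl
    have hβmem : β ∈ π₀.parts := by rw [hπ₀parts]; exact Finset.mem_insert_self _ _
    rw [Finset.sum_eq_single_of_mem π₀ (Finset.mem_univ _)]
    · rw [if_pos hβmem, hπ₀parts, Finset.erase_insert hβnotbot, Finset.prod_map]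
      rfl
    · intro π _ hne
      by_cases hmem : β ∈ π.parts
      · rw [if_pos hmem]
        -- some non-β part has ≥ 2 elements, else π = π₀
        by_contra hprod
        have hsing : ∀ ζ ∈ π.parts.erase β, ∃ a, ζ = {a} := by
          intro ζ hζ
          have hζp := Finset.mem_of_mem_erase hζ
          have hcard : ζ.card = 1 := by
            by_contra hc
            have h2 : 2 ≤ ζ.card := by
              have h1 : 1 ≤ ζ.card := (π.nonempty_of_mem_parts hζp).card_pos
              omega
            exact hprod (by rw [Finset.prod_eq_zero hζ (hΓ₀ ζ h2), mul_zero])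
          exact Finset.card_eq_one.1 hcard
        apply hne
        apply Finpartition.ext
        rw [hπ₀parts]
        ext ζ
        constructor
        · intro hζ
          rcases eq_or_ne ζ β with rfl | hzb
          · exact Finset.mem_insert_self _ _
          · obtain ⟨a, rfl⟩ := hsing ζ (Finset.mem_erase.2 ⟨hzb, hζ⟩)
            refine Finset.mem_insert_of_mem (Finset.mem_map.2 ⟨a, ?_, rfl⟩)
            have haα : a ∈ α := π.le hζ (Finset.mem_singleton_self a)
            have haβ : a ∉ β := fun h =>
              hzb (π.eq_of_mem_parts hζ hmem (Finset.mem_singleton_self a) h)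
            exact Finset.mem_sdiff.2 ⟨haα, haβ⟩
        · intro hζ
          rcases Finset.mem_insert.1 hζ with rfl | hζ
          · exact hmem
          · obtain ⟨a, ha, rfl⟩ := Finset.mem_map.1 hζ
            obtain ⟨haα, haβ⟩ := Finset.mem_sdiff.1 ha
            obtain ⟨ζ', hζ', haζ'⟩ := π.exists_mem haα
            have hz'b : ζ' ≠ β := fun h => haβ (h ▸ haζ')
            obtain ⟨b, rfl⟩ := hsing ζ' (Finset.mem_erase.2 ⟨hz'b, hζ'⟩)
            cases Finset.mem_singleton.1 haζ'
            exact hζ'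
      · exact if_neg hmem
  · rw [if_neg hβα]
    refine Finset.sum_eq_zero fun π _ => ?_
    rw [if_neg]
    intro hmem
    exact hβα (π.le hmem)
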